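/- Let Ω ⊂ ℂ be a bounded domain containing 0, let F: D(0,1) → Ω be a biholomorphism with F(0) = 0, and suppose the Bergman kernel of Ω satisfies K_Ω(z, 0) = 1/v(Ω) for all z ∈ Ω. Then F is linear, i.e., F(z) = F'(0)·z, and hence Ω is the disk D(0, |F'(0)|). -/

import Mathlib

open MeasureTheory Metric Complex Filter

open Set Topology

/-- The Bergman space of square-integrable holomorphic functions on `Ω ⊆ ℂ`. -/
def BergmanSpaceC (Ω : Set ℂ) : Set (ℂ → ℂ) :=
  {f | DifferentiableOn ℂ f Ω ∧ MemLp f 2 (volume.restrict Ω)}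

/-- `K` is the Bergman (reproducing) kernel of `Ω ⊆ ℂ`. -/
def IsBergmanKernelC (Ω : Set ℂ) (K : ℂ → ℂ → ℂ) : Prop :=
  (∀ w ∈ Ω, (fun z => K z w) ∈ BergmanSpaceC Ω) ∧
  (∀ z ∈ Ω, ∀ w ∈ Ω, K z w = (starRingEnd ℂ) (K w z)) ∧
  (∀ f ∈ BergmanSpaceC Ω, ∀ z ∈ Ω, f z = ∫ w in Ω, f w * K z w)

section Aux

open Real in
lemma bergman_circle_avg {f : ℂ → ℂ} {ρ : ℝ} (hρ : 0 < ρ) (hρ1 : ρ < 1)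
    (hd : DifferentiableOn ℂ f (ball 0 1)) :
    ∫ θ in (0:ℝ)..(2*π), f (circleMap 0 ρ θ) = (2*π : ℝ) • f 0 := by
  have hsub : closedBall (0:ℂ) ρ ⊆ ball 0 1 := closedBall_subset_ball hρ1
  have h := (hd.mono hsub).circleIntegral_sub_inv_smul (mem_ball_self hρ)
  rw [circleIntegral] at h
  have heq : ∀ θ ∈ uIcc (0:ℝ) (2*π),
      deriv (circleMap 0 ρ) θ • ((circleMap 0 ρ θ - 0)⁻¹ • f (circleMap 0 ρ θ))
        = I • f (circleMap 0 ρ θ) := by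
    intro θ _
    have hne : circleMap 0 ρ θ ≠ 0 := circleMap_ne_center hρ.ne'
    rw [deriv_circleMap]
    simp only [smul_eq_mul, sub_zero]
    field_simp
  rw [intervalIntegral.integral_congr heq] at h
  rw [intervalIntegral.integral_smul] at h
  have h2 : I • (∫ θ in (0:ℝ)..(2*π), f (circleMap 0 ρ θ)) = I • ((2*π:ℝ) • f 0) := by
    rw [h]
    simp only [smul_eq_mul, real_smul]
    push_cast
    ring
  exact smul_right_injective ℂ I_ne_zero h2

open Real in
lemma bergman_disk_int {f : ℂ → ℂ} {r : ℝ} (hr : 0 < r) (hr1 : r < 1)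
    (hd : DifferentiableOn ℂ f (ball 0 1)) :
    ∫ z in ball (0:ℂ) r, f z = (π * r^2 : ℝ) • f 0 := by
  set φ : ℝ × ℝ → ℂ := fun p => p.1 * (Real.cos p.2 + Real.sin p.2 * Complex.I) with hφdef
  have hφ : Continuous φ := by fun_prop
  have hφeq : ∀ p : ℝ × ℝ, Complex.polarCoord.symm p = φ p := fun p =>
    Complex.polarCoord_symm_apply p
  have hφcm : ∀ ρ θ : ℝ, φ (ρ, θ) = circleMap 0 ρ θ := by
    intro ρ θ
    simp [hφdef, circleMap, Complex.exp_mul_I]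
  set s : Set (ℝ × ℝ) := Ioo 0 r ×ˢ Ioo (-π) π with hsdef
  have hsm : MeasurableSet s := measurableSet_Ioo.prod measurableSet_Ioo
  have habs : ∀ p : ℝ × ℝ, 0 ≤ p.1 → ‖φ p‖ = p.1 := by
    intro p hp
    rw [← hφeq, Complex.norm_polarCoord_symm, _root_.abs_of_nonneg hp]
  set g : ℂ → ℂ := (ball (0:ℂ) r).indicator f with hgdef
  have h1 : ∫ z in ball (0:ℂ) r, f z = ∫ z, g z := (integral_indicator measurableSet_ball).symm
  have h2 : ∫ z, g z = ∫ p in polarCoord.target, p.1 • g (Complex.polarCoord.symm p) :=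
    (Complex.integral_comp_polarCoord_symm g).symm
  have h3 : ∫ p in polarCoord.target, p.1 • g (Complex.polarCoord.symm p)
      = ∫ p in s, p.1 • f (φ p) := by
    have hcong : ∀ p ∈ polarCoord.target, p.1 • g (Complex.polarCoord.symm p)
        = s.indicator (fun p => p.1 • f (φ p)) p := by
      rintro ⟨ρ, θ⟩ hp
      rw [polarCoord_target] at hp
      obtain ⟨hρ, hθ⟩ := hp
      simp only at hρ hθ
      rw [hφeq]
      by_cases hlt : ρ < r
      · have hmem : φ (ρ, θ) ∈ ball (0:ℂ) r := by
          rw [mem_ball_zero_iff, habs (ρ, θ) (le_of_lt hρ)]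
          exact hlt
        have hmem' : ((ρ, θ) : ℝ × ℝ) ∈ s := ⟨⟨hρ, hlt⟩, hθ⟩
        rw [hgdef, Set.indicator_of_mem hmem, Set.indicator_of_mem hmem']
      · have hnmem : φ (ρ, θ) ∉ ball (0:ℂ) r := by
          rw [mem_ball_zero_iff, habs (ρ, θ) (le_of_lt hρ)]
          exact hlt
        have hnmem' : ((ρ, θ) : ℝ × ℝ) ∉ s := by
          intro hc
          exact hlt hc.1.2
        rw [hgdef, Set.indicator_of_notMem hnmem, Set.indicator_of_notMem hnmem', smul_zero]
    rw [setIntegral_congr_fun polarCoord.open_target.measurableSet hcong,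
      setIntegral_indicator hsm]
    have hts : polarCoord.target ∩ s = s := by
      rw [polarCoord_target, hsdef, Set.prod_inter_prod, Set.inter_self, Set.Ioi_inter_Ioo,
        max_eq_right le_rfl]
    rw [hts]
  obtain ⟨M, hM⟩ := (isCompact_closedBall (0:ℂ) r).exists_bound_of_continuousOn
    (hd.continuousOn.mono (closedBall_subset_ball hr1))
  have hmaps : ∀ p ∈ s, φ p ∈ ball (0:ℂ) 1 := by
    rintro ⟨ρ, θ⟩ ⟨⟨h1', h2'⟩, _⟩
    rw [mem_ball_zero_iff, habs (ρ, θ) h1'.le]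
    exact h2'.trans hr1
  have hcontOn : ContinuousOn (fun p : ℝ × ℝ => p.1 • f (φ p)) s := by
    apply ContinuousOn.smul continuous_fst.continuousOn
    exact hd.continuousOn.comp hφ.continuousOn hmaps
  have hrs : (volume : Measure (ℝ × ℝ)).restrict s
      = (volume.restrict (Ioo 0 r)).prod (volume.restrict (Ioo (-π) π)) := by
    rw [Measure.prod_restrict, ← Measure.volume_eq_prod]
  have hsfin : volume s < ⊤ := by
    rw [hsdef, Measure.volume_eq_prod, Measure.prod_prod, Real.volume_Ioo, Real.volume_Ioo]
    exact ENNReal.mul_lt_top ENNReal.ofReal_lt_top ENNReal.ofReal_lt_top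
  haveI : IsFiniteMeasure ((volume : Measure (ℝ × ℝ)).restrict s) :=
    ⟨by rwa [Measure.restrict_apply_univ]⟩
  have hint : Integrable (fun p : ℝ × ℝ => p.1 • f (φ p)) (volume.restrict s) := by
    apply Integrable.mono' (integrable_const (r * M))
    · exact hcontOn.aestronglyMeasurable hsm
    · refine (ae_restrict_iff' hsm).2 (ae_of_all _ ?_)
      rintro ⟨ρ, θ⟩ ⟨⟨h1', h2'⟩, _⟩
      rw [norm_smul]
      have hb1 : ‖ρ‖ ≤ r := by rw [Real.norm_eq_abs, _root_.abs_of_pos h1']; exact h2'.le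
      have hb2 : ‖f (φ (ρ, θ))‖ ≤ M := by
        apply hM
        rw [mem_closedBall_zero_iff, habs (ρ, θ) h1'.le]
        exact h2'.le
      exact mul_le_mul hb1 hb2 (norm_nonneg _) hr.le
  rw [hrs] at hint
  have h4 : ∫ p in s, p.1 • f (φ p)
      = ∫ ρ in Ioo (0:ℝ) r, ∫ θ in Ioo (-π) π, ρ • f (φ (ρ, θ)) := by
    rw [hrs]
    exact integral_prod _ hint
  have hinner : ∀ ρ ∈ Ioo (0:ℝ) r,
      ∫ θ in Ioo (-π) π, ρ • f (φ (ρ, θ)) = (ρ * (2*π)) • f 0 := by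
    intro ρ hρ
    have hρ1 : ρ < 1 := hρ.2.trans hr1
    have hper : Function.Periodic (fun θ => f (circleMap 0 ρ θ)) (2*π) :=
      (periodic_circleMap 0 ρ).comp f
    calc ∫ θ in Ioo (-π) π, ρ • f (φ (ρ, θ))
        = ρ • ∫ θ in Ioo (-π) π, f (circleMap 0 ρ θ) := by
          simp_rw [hφcm]; rw [integral_smul]
      _ = ρ • ∫ θ in (-π)..π, f (circleMap 0 ρ θ) := by
          rw [intervalIntegral.integral_of_le (by linarith [Real.pi_pos] : (-π:ℝ) ≤ π),
            integral_Ioc_eq_integral_Ioo]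
      _ = ρ • ∫ θ in (0:ℝ)..(2*π), f (circleMap 0 ρ θ) := by
          have := hper.intervalIntegral_add_eq (-π) 0
          rw [show -π + 2*π = π by ring, show (0:ℝ) + 2*π = 2*π by ring] at this
          rw [this]
      _ = ρ • ((2*π:ℝ) • f 0) := by rw [bergman_circle_avg hρ.1 hρ1 hd]
      _ = (ρ * (2*π)) • f 0 := by rw [smul_smul]
  have h5 : ∫ ρ in Ioo (0:ℝ) r, ∫ θ in Ioo (-π) π, ρ • f (φ (ρ, θ))
      = ∫ ρ in Ioo (0:ℝ) r, (ρ * (2*π)) • f 0 :=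
    setIntegral_congr_fun measurableSet_Ioo hinner
  have h6 : ∫ ρ in Ioo (0:ℝ) r, (ρ * (2*π)) • f 0 = (π * r^2 : ℝ) • f 0 := by
    rw [integral_smul_const]
    congr 1
    have : ∫ ρ in Ioo (0:ℝ) r, ρ * (2*π) = (∫ ρ in Ioo (0:ℝ) r, ρ) * (2*π) :=
      integral_mul_const _ _
    rw [this, ← integral_Ioc_eq_integral_Ioo,
      ← intervalIntegral.integral_of_le hr.le, integral_id]
    ring
  rw [h1, h2, h3, h4, h5, h6]

open Real Filter in
lemma bergman_mvp {f : ℂ → ℂ} (hd : DifferentiableOn ℂ f (ball 0 1))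
    (hi : IntegrableOn f (ball 0 1)) :
    ∫ z in ball (0:ℂ) 1, f z = (π : ℝ) • f 0 := by
  set r : ℕ → ℝ := fun n => 1 - 1 / (n + 2) with hrdef
  have hrpos : ∀ n, 0 < r n := by
    intro n
    have h2 : (1:ℝ) / (n + 2) ≤ 1 / 2 := by
      apply one_div_le_one_div_of_le
      · norm_num
      · linarith [Nat.cast_nonneg (α := ℝ) n]
    simp only [hrdef]
    linarith
  have hrlt : ∀ n, r n < 1 := by
    intro n
    have : (0:ℝ) < 1 / (n + 2) := by positivity
    simp only [hrdef]; linarith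
  have hmono : Monotone fun n => ball (0:ℂ) (r n) := by
    intro a b hab
    apply ball_subset_ball
    simp only [hrdef]
    have : (1:ℝ) / (b + 2) ≤ 1 / (a + 2) := by
      apply one_div_le_one_div_of_le
      · positivity
      · have := (Nat.cast_le (α := ℝ)).2 hab; linarith
    linarith
  have hunion : ⋃ n, ball (0:ℂ) (r n) = ball (0:ℂ) 1 := by
    ext z
    simp only [Set.mem_iUnion, mem_ball_zero_iff]
    constructor
    · rintro ⟨n, hn⟩
      exact hn.trans (hrlt n)
    · intro hz
      obtain ⟨n, hn⟩ := exists_nat_gt (1 / (1 - ‖z‖))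
      refine ⟨n, ?_⟩
      have h1z : 0 < 1 - ‖z‖ := by linarith
      have hn2 : 1 / (1 - ‖z‖) < (n:ℝ) + 2 := by linarith [Nat.cast_nonneg (α := ℝ) n]
      have : 1 / ((n:ℝ) + 2) < 1 - ‖z‖ := by
        rw [div_lt_iff₀ (by positivity)]
        rw [div_lt_iff₀ h1z] at hn2
        linarith
      simp only [hrdef]
      linarith
  have hlim := tendsto_setIntegral_of_monotone (fun n => measurableSet_ball) hmono
    (by rwa [hunion])
  rw [hunion] at hlim
  have hval : ∀ n, ∫ z in ball (0:ℂ) (r n), f z = (π * (r n)^2 : ℝ) • f 0 := fun n =>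
    bergman_disk_int (hrpos n) (hrlt n) hd
  have hrlim : Tendsto r atTop (𝓝 1) := by
    have h1 : Tendsto (fun n : ℕ => ((n:ℝ) + 2)) atTop atTop :=
      tendsto_atTop_add_const_right _ _ tendsto_natCast_atTop_atTop
    have h2 : Tendsto (fun n : ℕ => 1 / ((n:ℝ) + 2)) atTop (𝓝 0) := by
      have h := h1.inv_tendsto_atTop; simp only [one_div]; exact h
    have h3 := tendsto_const_nhds (x := (1:ℝ)) (f := atTop (α := ℕ)) |>.sub h2
    rw [sub_zero] at h3
    simpa [hrdef, one_div] using h3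
  have hlim2 : Tendsto (fun n => (π * (r n)^2 : ℝ) • f 0) atTop (𝓝 ((π : ℝ) • f 0)) := by
    have : Tendsto (fun n => (π * (r n)^2 : ℝ)) atTop (𝓝 (π * 1^2)) :=
      tendsto_const_nhds.mul (hrlim.pow 2)
    simpa using this.smul_const (f 0)
  simp_rw [hval] at hlim
  exact tendsto_nhds_unique hlim hlim2

lemma bergman_det_cmul (c : ℂ) :
    (((1 : ℂ →L[ℂ] ℂ).smulRight c).restrictScalars ℝ : ℂ →L[ℝ] ℂ).det = Complex.normSq c := by
  have : (((1 : ℂ →L[ℂ] ℂ).smulRight c).restrictScalars ℝ : ℂ →ₗ[ℝ] ℂ).det = Complex.normSq c := by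
    rw [← LinearMap.det_toMatrix Complex.basisOneI]
    have : (LinearMap.toMatrix Complex.basisOneI Complex.basisOneI)
        (((1 : ℂ →L[ℂ] ℂ).smulRight c).restrictScalars ℝ : ℂ →ₗ[ℝ] ℂ) =
        Matrix.of ![![c.re, -c.im], ![c.im, c.re]] := by
      ext i j
      fin_cases i <;> fin_cases j <;>
        simp [LinearMap.toMatrix_apply, Complex.coe_basisOneI_repr, mul_comm]
    rw [this, Matrix.det_fin_two_of]
    simp [Complex.normSq_apply]
  exact this

lemma bergman_cov_deriv {U : Set ℂ} (hU : IsOpen U) {F : ℂ → ℂ} (hF : DifferentiableOn ℂ F U) :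
    ∀ z ∈ U, HasFDerivWithinAt F
      (((1 : ℂ →L[ℂ] ℂ).smulRight (deriv F z)).restrictScalars ℝ) U z := fun z hz =>
  ((((hF.differentiableAt (hU.mem_nhds hz)).hasDerivAt).hasFDerivAt).restrictScalars
    ℝ).hasFDerivWithinAt

lemma bergman_cov_integral {E : Type*} [NormedAddCommGroup E] [NormedSpace ℝ E]
    {U : Set ℂ} (hU : IsOpen U) {F : ℂ → ℂ} (hF : DifferentiableOn ℂ F U)
    (hinj : Set.InjOn F U) (g : ℂ → E) :
    ∫ w in F '' U, g w = ∫ z in U, Complex.normSq (deriv F z) • g (F z) := by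
  rw [integral_image_eq_integral_abs_det_fderiv_smul volume hU.measurableSet
    (bergman_cov_deriv hU hF) hinj g]
  apply setIntegral_congr_fun hU.measurableSet
  intro z _
  simp only [bergman_det_cmul]
  rw [_root_.abs_of_nonneg (Complex.normSq_nonneg _)]

lemma bergman_cov_integrable {E : Type*} [NormedAddCommGroup E] [NormedSpace ℝ E]
    {U : Set ℂ} (hU : IsOpen U) {F : ℂ → ℂ} (hF : DifferentiableOn ℂ F U)
    (hinj : Set.InjOn F U) (g : ℂ → E) :
    IntegrableOn g (F '' U) ↔
      IntegrableOn (fun z => Complex.normSq (deriv F z) • g (F z)) U := by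
  rw [integrableOn_image_iff_integrableOn_abs_det_fderiv_smul volume hU.measurableSet
    (bergman_cov_deriv hU hF) hinj g]
  constructor <;> intro h <;> apply h.congr_fun _ hU.measurableSet <;> intro z _ <;>
    simp only [bergman_det_cmul] <;> rw [_root_.abs_of_nonneg (Complex.normSq_nonneg _)]

end Aux

/-- If `Ω ⊆ ℂ` is a bounded domain containing `0`, `F : D(0,1) → Ω` is a biholomorphism
with `F(0) = 0`, and the Bergman kernel of `Ω` satisfies `K(z, 0) = 1/v(Ω)` for all
`z ∈ Ω`, then `F` is linear, and `Ω = D(0, |F'(0)|)`. -/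
theorem riemann_map_linear_of_minimal (Ω : Set ℂ)
    (hΩo : IsOpen Ω) (hΩc : IsConnected Ω) (hΩb : Bornology.IsBounded Ω) (h0 : (0 : ℂ) ∈ Ω)
    (F G : ℂ → ℂ) (hF : DifferentiableOn ℂ F (ball (0 : ℂ) 1)) (hG : DifferentiableOn ℂ G Ω)
    (hF₂ : Set.MapsTo F (ball (0 : ℂ) 1) Ω) (hG₁ : Set.MapsTo G Ω (ball (0 : ℂ) 1))
    (hGF : ∀ z ∈ ball (0 : ℂ) 1, G (F z) = z) (hFG : ∀ w ∈ Ω, F (G w) = w)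
    (hF0 : F 0 = 0)
    (K : ℂ → ℂ → ℂ) (hK : IsBergmanKernelC Ω K)
    (hKz0 : ∀ z ∈ Ω, K z 0 = ((1 / (volume Ω).toReal : ℝ) : ℂ)) :
    (∀ z ∈ ball (0 : ℂ) 1, F z = deriv F 0 * z) ∧
    Ω = ball (0 : ℂ) ‖deriv F 0‖ := by
  have h01 : (0:ℂ) ∈ ball (0:ℂ) 1 := mem_ball_self one_pos
  have hΩm : MeasurableSet Ω := hΩo.measurableSet
  have hvfin : volume Ω < ⊤ := hΩb.measure_lt_top
  set v : ℝ := (volume Ω).toReal with hv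
  have hvpos : 0 < v := ENNReal.toReal_pos (hΩo.measure_pos volume ⟨0, h0⟩).ne' hvfin.ne
  set c : ℂ := ((1 / v : ℝ) : ℂ) with hc
  have hcne : c ≠ 0 := by
    simp only [hc, ne_eq, Complex.ofReal_eq_zero, one_div, inv_eq_zero]
    exact hvpos.ne'
  haveI hfinΩ : IsFiniteMeasure (volume.restrict Ω) := ⟨by rwa [Measure.restrict_apply_univ]⟩
  haveI hfinB : IsFiniteMeasure (volume.restrict (ball (0:ℂ) 1)) :=
    ⟨by rw [Measure.restrict_apply_univ]; exact measure_ball_lt_top⟩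
  have himg : F '' ball (0:ℂ) 1 = Ω := by
    apply Set.Subset.antisymm (Set.image_subset_iff.2 hF₂)
    intro w hw
    exact ⟨G w, hG₁ hw, hFG w hw⟩
  have hinj : Set.InjOn F (ball (0:ℂ) 1) := fun x hx y hy hxy => by
    rw [← hGF x hx, ← hGF y hy, hxy]
  have hFd : ∀ z ∈ ball (0:ℂ) 1, HasDerivAt F (deriv F z) z := fun z hz =>
    (hF.differentiableAt (isOpen_ball.mem_nhds hz)).hasDerivAt
  have hGd : ∀ w ∈ Ω, HasDerivAt G (deriv G w) w := fun w hw =>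
    (hG.differentiableAt (hΩo.mem_nhds hw)).hasDerivAt
  have hchain : ∀ z ∈ ball (0:ℂ) 1, deriv G (F z) * deriv F z = 1 := by
    intro z hz
    have hcomp : HasDerivAt (G ∘ F) (deriv G (F z) * deriv F z) z :=
      (hGd (F z) (hF₂ hz)).comp z (hFd z hz)
    have hev : (id : ℂ → ℂ) =ᶠ[nhds z] G ∘ F := by
      filter_upwards [isOpen_ball.mem_nhds hz] with y hy
      exact (hGF y hy).symm
    exact (hcomp.congr_of_eventuallyEq hev).unique (hasDerivAt_id z)
  have hchain2 : ∀ w ∈ Ω, deriv F (G w) * deriv G w = 1 := by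
    intro w hw
    have hcomp : HasDerivAt (F ∘ G) (deriv F (G w) * deriv G w) w :=
      (hFd (G w) (hG₁ hw)).comp w (hGd w hw)
    have hev : (id : ℂ → ℂ) =ᶠ[nhds w] F ∘ G := by
      filter_upwards [hΩo.mem_nhds hw] with y hy
      exact (hFG y hy).symm
    exact (hcomp.congr_of_eventuallyEq hev).unique (hasDerivAt_id w)
  have hFne : ∀ z ∈ ball (0:ℂ) 1, deriv F z ≠ 0 := by
    intro z hz h
    have := hchain z hz
    rw [h, mul_zero] at this
    exact zero_ne_one this
  set a : ℂ := deriv F 0 with ha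
  have hane : a ≠ 0 := hFne 0 h01
  have hG0 : G 0 = 0 := by
    have := hGF 0 h01
    rwa [hF0] at this
  have hGinv : ∀ z ∈ ball (0:ℂ) 1, deriv G (F z) = (deriv F z)⁻¹ := fun z hz =>
    eq_inv_of_mul_eq_one_left (hchain z hz)
  have hG'0 : deriv G 0 = a⁻¹ := by
    have := hGinv 0 h01
    rwa [hF0] at this
  have hF' : DifferentiableOn ℂ (deriv F) (ball (0:ℂ) 1) :=
    ((hF.analyticOnNhd isOpen_ball).deriv).differentiableOn
  have hG' : DifferentiableOn ℂ (deriv G) Ω :=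
    ((hG.analyticOnNhd hΩo).deriv).differentiableOn
  -- mean value property on Ω
  have hmv : ∀ f : ℂ → ℂ, f ∈ BergmanSpaceC Ω → f 0 = (∫ w in Ω, f w) * c := by
    intro f hf
    have h1 := hK.2.2 f hf 0 h0
    have h2 : ∀ w ∈ Ω, f w * K 0 w = f w * c := by
      intro w hw
      rw [hK.2.1 0 h0 w hw, hKz0 w hw, hc, Complex.conj_ofReal]
    rw [setIntegral_congr_fun hΩm h2, integral_mul_const] at h1
    exact h1
  have hone : (v : ℂ) * c = 1 := by
    have hmem : (fun _ : ℂ => (1:ℂ)) ∈ BergmanSpaceC Ω :=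
      ⟨differentiableOn_const _, memLp_const _⟩
    have h1 := hmv _ hmem
    rw [integral_const, measureReal_restrict_apply_univ, measureReal_def, Complex.real_smul, mul_one, ← hv] at h1
    exact h1.symm
  -- integrability of |F'|² on the ball
  have hL2F' : IntegrableOn (fun z => ‖deriv F z‖^2) (ball (0:ℂ) 1) := by
    have h1 : IntegrableOn (fun _ : ℂ => (1:ℝ)) Ω := integrableOn_const hvfin.ne
    have h2 := (bergman_cov_integrable isOpen_ball hF hinj (fun _ => (1:ℝ))).1
      (by rwa [himg])
    apply h2.congr_fun ?_ measurableSet_ball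
    intro z _
    simp [Complex.sq_norm]
  have haesmF' : AEStronglyMeasurable (deriv F) (volume.restrict (ball (0:ℂ) 1)) :=
    hF'.continuousOn.aestronglyMeasurable measurableSet_ball
  have hmemF' : MemLp (deriv F) 2 (volume.restrict (ball (0:ℂ) 1)) :=
    (memLp_two_iff_integrable_sq_norm haesmF').2 hL2F'
  have hintF' : IntegrableOn (deriv F) (ball (0:ℂ) 1) := hmemF'.integrable one_le_two
  have hintconjF' : IntegrableOn (fun z => (starRingEnd ℂ) (deriv F z)) (ball (0:ℂ) 1) :=
    (Complex.conjCLE : ℂ →L[ℝ] ℂ).integrable_comp hintF'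
  -- deriv G belongs to the Bergman space of Ω
  have hmemG' : (deriv G) ∈ BergmanSpaceC Ω := by
    refine ⟨hG', ?_⟩
    apply (memLp_two_iff_integrable_sq_norm
      (hG'.continuousOn.aestronglyMeasurable hΩm)).2
    have h3 : IntegrableOn (fun _ : ℂ => (1:ℝ)) (ball (0:ℂ) 1) :=
      integrableOn_const measure_ball_lt_top.ne
    have h4 : IntegrableOn
        (fun z => Complex.normSq (deriv F z) • ‖deriv G (F z)‖^2) (ball (0:ℂ) 1) := by
      apply h3.congr_fun ?_ measurableSet_ball
      intro z hz
      simp only [hGinv z hz, smul_eq_mul, Complex.sq_norm,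
        Complex.normSq_inv]
      exact (mul_inv_cancel₀ (Complex.normSq_pos.2 (hFne z hz)).ne').symm
    have h2 := (bergman_cov_integrable isOpen_ball hF hinj (fun w => ‖deriv G w‖^2)).2 h4
    rwa [himg] at h2
  -- the two integral identities
  have hA : a⁻¹ = (∫ z in ball (0:ℂ) 1, (starRingEnd ℂ) (deriv F z)) * c := by
    have h1 := hmv _ hmemG'
    rw [hG'0] at h1
    have h2 : ∫ w in Ω, deriv G w = ∫ z in ball (0:ℂ) 1, (starRingEnd ℂ) (deriv F z) := by
      rw [← himg, bergman_cov_integral isOpen_ball hF hinj]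
      apply setIntegral_congr_fun measurableSet_ball
      intro z hz
      simp only [hGinv z hz, Complex.real_smul, Complex.normSq_eq_conj_mul_self]
      rw [mul_assoc, mul_inv_cancel₀ (hFne z hz), mul_one]
    rw [h2] at h1
    exact h1
  have hv2 : (v:ℂ) = ∫ z in ball (0:ℂ) 1, deriv F z * (starRingEnd ℂ) (deriv F z) := by
    have h1 : ∫ w in Ω, (1:ℂ) = (v:ℂ) := by
      rw [integral_const, measureReal_restrict_apply_univ, measureReal_def, Complex.real_smul, mul_one, ← hv]
    rw [← h1, ← himg, bergman_cov_integral isOpen_ball hF hinj]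
    apply setIntegral_congr_fun measurableSet_ball
    intro z _
    simp only [Complex.real_smul, mul_one, Complex.normSq_eq_conj_mul_self]
    ring
  -- mean value property on the disk
  have hMVP : ∫ z in ball (0:ℂ) 1, deriv F z = (Real.pi : ℂ) * a := by
    rw [bergman_mvp hF' hintF', Complex.real_smul, ha]
  have hconjint : ∫ z in ball (0:ℂ) 1, (starRingEnd ℂ) (deriv F z)
      = (Real.pi : ℂ) * (starRingEnd ℂ) a := by
    rw [integral_conj, hMVP, map_mul, Complex.conj_ofReal]
  -- key identity : π a conj a = v
  have hkey : (Real.pi : ℂ) * (a * (starRingEnd ℂ) a) = (v : ℂ) := by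
    have h1 : a * a⁻¹ = 1 := mul_inv_cancel₀ hane
    rw [hA, hconjint] at h1
    have h2 : ((Real.pi : ℂ) * (a * (starRingEnd ℂ) a)) * c = (v:ℂ) * c := by
      rw [hone, ← h1]; ring
    exact mul_right_cancel₀ hcne h2
  -- volume of unit ball
  have hπball : (volume (ball (0:ℂ) 1)).toReal = Real.pi := by
    rw [Complex.volume_ball]
    simp
  -- the variance integral vanishes
  have hsubmem : MemLp (fun z => deriv F z - a) 2 (volume.restrict (ball (0:ℂ) 1)) :=
    hmemF'.sub (memLp_const a)
  have hnormint : IntegrableOn (fun z => Complex.normSq (deriv F z - a)) (ball (0:ℂ) 1) := by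
    have h5 : IntegrableOn (fun z => ‖deriv F z - a‖^2) (ball (0:ℂ) 1) :=
      (memLp_two_iff_integrable_sq_norm hsubmem.aestronglyMeasurable).1 hsubmem
    apply h5.congr_fun ?_ measurableSet_ball
    intro z _
    simp [Complex.sq_norm]
  have hT1 : IntegrableOn (fun z => deriv F z * (starRingEnd ℂ) (deriv F z))
      (ball (0:ℂ) 1) := by
    have h1 : IntegrableOn (fun _ : ℂ => (1:ℂ)) Ω := integrableOn_const hvfin.ne
    have h2 := (bergman_cov_integrable isOpen_ball hF hinj (fun _ => (1:ℂ))).1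
      (by rwa [himg])
    have h2' : IntegrableOn (fun z => Complex.normSq (deriv F z) • (1:ℂ)) (ball (0:ℂ) 1) := h2
    apply h2'.congr_fun ?_ measurableSet_ball
    intro z _
    simp only [Complex.real_smul, mul_one, Complex.normSq_eq_conj_mul_self]
    ring
  have hEzero : ∫ z in ball (0:ℂ) 1, Complex.normSq (deriv F z - a) = 0 := by
    have hexp : ∀ z : ℂ, ((Complex.normSq (deriv F z - a) : ℝ) : ℂ)
        = deriv F z * (starRingEnd ℂ) (deriv F z)
          - a * (starRingEnd ℂ) (deriv F z)
          - (starRingEnd ℂ) a * deriv F z + a * (starRingEnd ℂ) a := by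
      intro z
      rw [← Complex.mul_conj, map_sub]
      ring
    have hC : ∫ z in ball (0:ℂ) 1, ((Complex.normSq (deriv F z - a) : ℝ) : ℂ) = 0 := by
      have hT2 : IntegrableOn (fun z => a * (starRingEnd ℂ) (deriv F z)) (ball (0:ℂ) 1) :=
        hintconjF'.const_mul a
      have hT3 : IntegrableOn (fun z => (starRingEnd ℂ) a * deriv F z) (ball (0:ℂ) 1) :=
        hintF'.const_mul _
      have hT4 : IntegrableOn (fun _ : ℂ => a * (starRingEnd ℂ) a) (ball (0:ℂ) 1) :=
        integrableOn_const measure_ball_lt_top.ne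
      calc ∫ z in ball (0:ℂ) 1, ((Complex.normSq (deriv F z - a) : ℝ) : ℂ)
          = ∫ z in ball (0:ℂ) 1,
            (deriv F z * (starRingEnd ℂ) (deriv F z)
              - a * (starRingEnd ℂ) (deriv F z)
              - (starRingEnd ℂ) a * deriv F z + a * (starRingEnd ℂ) a) := by
            exact setIntegral_congr_fun measurableSet_ball fun z _ => hexp z
        _ = (((∫ z in ball (0:ℂ) 1, deriv F z * (starRingEnd ℂ) (deriv F z))
              - ∫ z in ball (0:ℂ) 1, a * (starRingEnd ℂ) (deriv F z))
              - ∫ z in ball (0:ℂ) 1, (starRingEnd ℂ) a * deriv F z)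
              + ∫ z in ball (0:ℂ) 1, a * (starRingEnd ℂ) a := by
            have hTa : IntegrableOn (fun z => deriv F z * (starRingEnd ℂ) (deriv F z)
                - a * (starRingEnd ℂ) (deriv F z)
                - (starRingEnd ℂ) a * deriv F z) (ball (0:ℂ) 1) := (hT1.sub hT2).sub hT3
            have hTb : IntegrableOn (fun z => deriv F z * (starRingEnd ℂ) (deriv F z)
                - a * (starRingEnd ℂ) (deriv F z)) (ball (0:ℂ) 1) := hT1.sub hT2
            rw [integral_add hTa hT4, integral_sub hTb hT3, integral_sub hT1 hT2]
        _ = 0 := by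
            rw [integral_const_mul, integral_const_mul, hconjint, hMVP, ← hv2,
              integral_const, measureReal_restrict_apply_univ, measureReal_def, hπball, Complex.real_smul, ← hkey]
            ring
    have hintco : Integrable (fun z => ((Complex.normSq (deriv F z - a) : ℝ) : ℂ))
        (volume.restrict (ball (0:ℂ) 1)) :=
      (Complex.ofRealCLM : ℝ →L[ℝ] ℂ).integrable_comp hnormint
    have h7 := integral_re hintco
    rw [hC] at h7
    simpa using h7
  have haezero : (fun z => Complex.normSq (deriv F z - a))
      =ᵐ[volume.restrict (ball (0:ℂ) 1)] 0 :=
    (integral_eq_zero_iff_of_nonneg (fun z => Complex.normSq_nonneg _) hnormint).1 hEzero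
  -- deriv F is constant on the ball
  have hconst : ∀ z ∈ ball (0:ℂ) 1, deriv F z = a := by
    set S : Set ℂ := {z | z ∈ ball (0:ℂ) 1 ∧ deriv F z ≠ a} with hS
    have hSopen : IsOpen S := by
      have h := hF'.continuousOn.isOpen_inter_preimage isOpen_ball
        (isOpen_compl_singleton (x := a))
      have heq : S = ball (0:ℂ) 1 ∩ deriv F ⁻¹' ({a}ᶜ) := by
        ext z
        simp [hS]
      rw [heq]
      exact h
    have hSsub : S ⊆ {z | ¬ Complex.normSq (deriv F z - a) = 0} := by
      intro z hz
      simp only [Set.mem_setOf_eq]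
      rw [Complex.normSq_eq_zero, sub_eq_zero]
      exact hz.2
    have hSnull : volume S = 0 := by
      have h1 : (volume.restrict (ball (0:ℂ) 1))
          {z | ¬ Complex.normSq (deriv F z - a) = 0} = 0 := by
        have := haezero
        rw [Filter.EventuallyEq, ae_iff] at this
        simpa using this
      have h2 : (volume.restrict (ball (0:ℂ) 1)) S = 0 :=
        le_antisymm (h1 ▸ measure_mono hSsub) zero_le
      rwa [Measure.restrict_apply hSopen.measurableSet,
        Set.inter_eq_self_of_subset_left (fun z hz => hz.1)] at h2
    have hSempty : S = ∅ := hSopen.eq_empty_of_measure_zero hSnull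
    intro z hz
    by_contra hne
    have hzS : z ∈ S := ⟨hz, hne⟩
    rw [hSempty] at hzS
    exact Set.notMem_empty z hzS
  -- F is linear
  have hlin : ∀ z ∈ ball (0:ℂ) 1, F z = a * z := by
    intro z hz
    have hdif : DifferentiableOn ℂ (fun y => F y - a * y) (ball (0:ℂ) 1) :=
      hF.sub ((differentiable_id.const_mul a).differentiableOn)
    have hzero : ∀ y ∈ ball (0:ℂ) 1,
        fderivWithin ℂ (fun y => F y - a * y) (ball (0:ℂ) 1) y = 0 := by
      intro y hy
      have h1 : HasDerivAt (fun y => F y - a * y) (deriv F y - a) y :=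
        (hFd y hy).sub (by simpa using (hasDerivAt_id y).const_mul a)
      rw [hconst y hy, sub_self] at h1
      have h2 := (h1.hasFDerivAt).hasFDerivWithinAt.fderivWithin
        (isOpen_ball.uniqueDiffWithinAt hy)
      rw [h2]
      ext w
      simp
    have h3 := (convex_ball (0:ℂ) 1).is_const_of_fderivWithin_eq_zero hdif hzero hz h01
    simp only [hF0, mul_zero, sub_zero] at h3
    exact sub_eq_zero.1 h3
  constructor
  · exact hlin
  · rw [← himg]
    ext w
    simp only [Set.mem_image]
    constructor
    · rintro ⟨z, hz, rfl⟩
      rw [mem_ball_zero_iff, hlin z hz, norm_mul]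
      have hz1 : ‖z‖ < 1 := by
        rwa [mem_ball_zero_iff] at hz
      calc ‖a‖ * ‖z‖ < ‖a‖ * 1 :=
            mul_lt_mul_of_pos_left hz1 (norm_pos_iff.2 hane)
        _ = ‖a‖ := mul_one _
    · intro hw
      rw [mem_ball_zero_iff] at hw
      refine ⟨w / a, ?_, ?_⟩
      · rw [mem_ball_zero_iff, norm_div]
        rw [div_lt_one (norm_pos_iff.2 hane)]
        exact hw
      · rw [hlin (w / a) ?_, mul_div_cancel₀ _ hane]
        rw [mem_ball_zero_iff, norm_div]
        rw [div_lt_one (norm_pos_iff.2 hane)]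
        exact hw
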